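/- Let g : x → y and f : y → x be morphisms in a triangulated category with f ∘ g isomorphic to the identity of x. Then the cone of f is isomorphic to the cone of g shifted by [1]. -/

import Mathlib

open CategoryTheory CategoryTheory.Limits CategoryTheory.Pretriangulated

universe v u

namespace PaperGD

variable {C : Type u} [Category.{v} C] [Preadditive C] [HasZeroObject C] [HasShift C ℤ]
  [∀ n : ℤ, (CategoryTheory.shiftFunctor C n).Additive] [Pretriangulated C]

/-- `Hom_T(x,y) = 0`. -/
def HomZero (x y : C) : Prop := ∀ f : x ⟶ y, f = 0

/-- `pd_H w ≤ n` : vanishing of `Hom(w, h[m])` for all `h ∈ H`, `m > n`. -/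
def pdLE (H : Set C) (w : C) (n : ℤ) : Prop :=
  ∀ h ∈ H, ∀ m : ℤ, n < m → HomZero w (h⟦m⟧)

/-- `gd_H T ≤ n`. -/
def gdLE (H : Set C) (n : ℤ) : Prop := ∀ x ∈ H, pdLE H x n

/-- canonical map `⨁ᵢ Hom(M, f i) → Hom(M, ∐ f)`. -/
noncomputable def coprodHom (M : C) {ι : Type v} [DecidableEq ι] (f : ι → C)
    [HasCoproduct f] : DirectSum ι (fun i => (M ⟶ f i)) →+ (M ⟶ ∐ f) :=
  DirectSum.toAddMonoid fun i =>
    AddMonoidHom.mk' (fun g => g ≫ Sigma.ι f i) (fun _ _ => by simp [Preadditive.add_comp])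

/-- compactness: `Hom(M,-)` commutes with coproducts. -/
def IsCompactObj (M : C) : Prop :=
  ∀ (ι : Type v) (f : ι → C) [DecidableEq ι] [HasCoproduct f],
    Function.Bijective (coprodHom M f)

/-- the smallest thick subcategory containing `M`. -/
inductive ThickOf (M : C) : C → Prop
  | base : ThickOf M M
  | zero (x : C) : Limits.IsZero x → ThickOf M x
  | shift (x : C) (n : ℤ) : ThickOf M x → ThickOf M (x⟦n⟧)
  | ext (T : Triangle C) : (T ∈ distTriang C) → ThickOf M T.obj₁ → ThickOf M T.obj₂ →
      ThickOf M T.obj₃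
  | retract (x y : C) (i : y ⟶ x) (p : x ⟶ y) : i ≫ p = 𝟙 y → ThickOf M x → ThickOf M y

/-- `M` is a compact silting object: compact, no positive self-extensions, and it
generates the compacts as a thick subcategory. -/
structure IsCompactSilting (M : C) : Prop where
  compact : IsCompactObj M
  orth : ∀ n : ℤ, 0 < n → HomZero M (M⟦n⟧)
  thick_eq : ∀ x : C, ThickOf M x ↔ IsCompactObj x

/-- the heart `M^{⊥_{≠0}}` of the silting t-structure. -/
def siltHeart (M : C) : Set C := {y | ∀ n : ℤ, n ≠ 0 → HomZero M (y⟦n⟧)}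

/-- the aisle `M^{⊥_{>0}}`. -/
def siltAisle (M : C) : Set C := {y | ∀ n : ℤ, 0 < n → HomZero M (y⟦n⟧)}

/-- the coaisle `M^{⊥_{≤0}}`. -/
def siltCoaisle (M : C) : Set C := {y | ∀ n : ℤ, n ≤ 0 → HomZero M (y⟦n⟧)}

/-- `T` is compactly generated. -/
def CompactlyGenerated (C : Type u) [Category.{v} C] [Preadditive C] [HasZeroObject C]
    [HasShift C ℤ] [∀ n : ℤ, (CategoryTheory.shiftFunctor C n).Additive] [Pretriangulated C] :
    Prop :=
  ∀ y : C, (∀ x : C, IsCompactObj x → ∀ n : ℤ, HomZero x (y⟦n⟧)) → Limits.IsZero y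

/-- bounded objects `T^b = (T^c)^⋇`. -/
def Bounded (t : C) : Prop :=
  ∀ x : C, IsCompactObj x → ∃ N : ℕ, ∀ n : ℤ, (N : ℤ) ≤ |n| → HomZero x (t⟦n⟧)

/-- `x ∈ Add s` : summand of a coproduct of copies of `s`. -/
def InAdd (s x : C) : Prop :=
  ∃ (ι : Type v) (_ : HasCoproduct (fun _ : ι => s)) (i : x ⟶ ∐ (fun _ : ι => s))
    (p : (∐ (fun _ : ι => s)) ⟶ x), i ≫ p = 𝟙 x

/-- `x ∈ add s` : summand of a finite coproduct of copies of `s`. -/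
def InAddFin (s x : C) : Prop :=
  ∃ (n : ℕ) (_ : HasCoproduct (fun _ : Fin n => s)) (i : x ⟶ ∐ (fun _ : Fin n => s))
    (p : (∐ (fun _ : Fin n => s)) ⟶ x), i ≫ p = 𝟙 x

/-- finite filtrations (in the heart `H`) with quotients satisfying `P`,
encoded by triangles `s₁ → x → x₁ → s₁[1]`. -/
inductive FiltBy (H : Set C) (P : C → Prop) : ℕ → C → Prop
  | zero (x : C) : P x → FiltBy H P 0 x
  | succ (n : ℕ) (T : Triangle C) : (T ∈ distTriang C) → P T.obj₁ → T.obj₃ ∈ H →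
      FiltBy H P n T.obj₃ → FiltBy H P (n + 1) T.obj₂

/-- the class `Add M ∗ Add M[1] ∗ ⋯ ∗ Add M[d]`. -/
inductive AddStar (M : C) : ℕ → C → Prop
  | zero (x : C) : InAdd M x → AddStar M 0 x
  | succ (d : ℕ) (T : Triangle C) (w : C) : (T ∈ distTriang C) → InAdd M T.obj₁ →
      AddStar M d w → Nonempty (T.obj₃ ≅ w⟦(1 : ℤ)⟧) → AddStar M (d + 1) T.obj₂

/-- `Hom_T(x,-)` restricted to `H` commutes with coproducts. -/
def HomPreservesCoprodsOn (H : Set C) (x : C) : Prop :=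
  ∀ (ι : Type v) (h : ι → C) [DecidableEq ι] [HasCoproduct h],
    (∀ i, h i ∈ H) → Function.Bijective (coprodHom x h)

/-- a t-structure `(U,V)` (as a torsion pair with `U[1] ⊆ U`). -/
structure TStruct (C : Type u) [Category.{v} C] [Preadditive C] [HasZeroObject C]
    [HasShift C ℤ] [∀ n : ℤ, (CategoryTheory.shiftFunctor C n).Additive] [Pretriangulated C] where
  U : Set C
  V : Set C
  U_eq : U = {x | ∀ v ∈ V, HomZero x v}
  V_eq : V = {y | ∀ u ∈ U, HomZero u y}
  decomp : ∀ x : C, ∃ (u v : C) (f : u ⟶ x) (g : x ⟶ v) (h : v ⟶ u⟦(1 : ℤ)⟧),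
      (Triangle.mk f g h ∈ distTriang C) ∧ u ∈ U ∧ v ∈ V
  shift_le : ∀ u ∈ U, u⟦(1 : ℤ)⟧ ∈ U

/-- the heart `H = U ∩ V[1]` of a t-structure. -/
def TStruct.heart (t : TStruct C) : Set C := {x | x ∈ t.U ∧ x⟦(-1 : ℤ)⟧ ∈ t.V}


/-- if `g : x ⟶ y` is a section of `f : y ⟶ x`, then
`cone(f) ≅ cone(g)[1]`. -/
theorem cone_iso_of_section (x y cg cf : C) (g : x ⟶ y) (f : y ⟶ x)
    (hgf : g ≫ f = 𝟙 x)
    (g₂ : y ⟶ cg) (g₃ : cg ⟶ x⟦(1 : ℤ)⟧) (hTg : Triangle.mk g g₂ g₃ ∈ distTriang C)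
    (f₂ : x ⟶ cf) (f₃ : cf ⟶ y⟦(1 : ℤ)⟧) (hTf : Triangle.mk f f₂ f₃ ∈ distTriang C) :
    Nonempty (cf ≅ cg⟦(1 : ℤ)⟧) := by
  haveI : IsSplitMono g := ⟨⟨⟨f, hgf⟩⟩⟩
  have hg₂ : g ≫ g₂ = 0 := comp_distTriang_mor_zero₁₂ _ hTg
  have hg₃ : g₃ = 0 := Triangle.mor₃_eq_zero_of_mono₁ _ hTg (IsSplitMono.mono g)
  -- the triangle on g is split: `biprod.lift f g₂ : y ⟶ x ⊞ cg` is an iso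
  let φ : Triangle.mk g g₂ g₃ ⟶ binaryBiproductTriangle x cg :=
    { hom₁ := 𝟙 x
      hom₂ := biprod.lift f g₂
      hom₃ := 𝟙 cg
      comm₁ := by
        change g ≫ biprod.lift f g₂ = 𝟙 x ≫ biprod.inl
        ext
        · simp [hgf]
        · simp [hg₂]
      comm₂ := by change g₂ ≫ 𝟙 cg = biprod.lift f g₂ ≫ biprod.snd; simp
      comm₃ := by change g₃ ≫ (shiftFunctor C (1 : ℤ)).map (𝟙 x) = 𝟙 cg ≫ 0; simp [hg₃] }
  have h2 : IsIso (biprod.lift f g₂) :=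
    isIso₂_of_isIso₁₃ φ hTg (binaryBiproductTriangle_distinguished x cg)
      (by dsimp [φ]; exact IsIso.id _) (by dsimp [φ]; exact IsIso.id _)
  have hswap : biprod.lift f g₂ ≫ (biprod.braiding x cg).hom = biprod.lift g₂ f := by
    ext <;> simp
  have h2' : IsIso (biprod.lift g₂ f) := by
    rw [← hswap]; infer_instance
  -- compare the triangle on f with the rotation of the biproduct triangle on (cg, x)
  have hT₂ := rot_of_distTriang _ (binaryBiproductTriangle_distinguished cg x)
  obtain ⟨c, hc₁, hc₂⟩ := complete_distinguished_triangle_morphism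
    (Triangle.mk f f₂ f₃) ((binaryBiproductTriangle cg x).rotate)
    hTf hT₂ (biprod.lift g₂ f) (𝟙 x) (by change f ≫ 𝟙 x = biprod.lift g₂ f ≫ biprod.snd; simp)
  let ψ : Triangle.mk f f₂ f₃ ⟶ (binaryBiproductTriangle cg x).rotate :=
    { hom₁ := biprod.lift g₂ f
      hom₂ := 𝟙 x
      hom₃ := c
      comm₁ := by change f ≫ 𝟙 x = biprod.lift g₂ f ≫ biprod.snd; simp
      comm₂ := hc₁
      comm₃ := hc₂ }
  have h3 : IsIso ψ.hom₃ := isIso₃_of_isIso₁₂ ψ hTf hT₂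
    (by dsimp [ψ]; exact h2') (by dsimp [ψ]; exact IsIso.id _)
  exact ⟨@asIso _ _ _ _ c h3⟩

end PaperGD
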